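/- Let L_H satisfy (1−ε)L_G − εγI ⪯ L_H ⪯ (1+ε)L_G + εγI with 0 ≤ ε < 1 and γ ≥ 0. For λ > 0 let f̂ = (λL_G + I)^{-1} y and f̃ = (λL_H + I)^{-1} y. Then ‖f̃ − f̂‖² ≤ (ε²/(1−ε)) (1/4 + λγ) (λ f̂^T L_G f̂ + λγ ‖f̂‖²). -/

import Mathlib

open Matrix

lemma psd_smul' {n : ℕ} {M : Matrix (Fin n) (Fin n) ℝ} (hM : M.PosSemidef)
    {c : ℝ} (hc : 0 ≤ c) : (c • M).PosSemidef := by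
  refine PosSemidef.of_dotProduct_mulVec_nonneg ?_ fun x => ?_
  · show (c • M)ᴴ = c • M
    rw [conjTranspose_smul, star_trivial, hM.1.eq]
  · rw [smul_mulVec, dotProduct_smul, smul_eq_mul]
    exact mul_nonneg hc (hM.dotProduct_mulVec_nonneg x)

lemma cs_aux {n : ℕ} {P : Matrix (Fin n) (Fin n) ℝ} (hP : P.PosSemidef)
    (x z : Fin n → ℝ) :
    (x ⬝ᵥ (P *ᵥ z))^2 ≤ (x ⬝ᵥ (P *ᵥ x)) * (z ⬝ᵥ (P *ᵥ z)) := by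
  have hPs : Pᵀ = P := by
    rw [← conjTranspose_eq_transpose_of_trivial]; exact hP.1.eq
  have hsymm : ∀ u v : Fin n → ℝ, u ⬝ᵥ (P *ᵥ v) = v ⬝ᵥ (P *ᵥ u) := by
    intro u v
    have hvm : u ᵥ* P = P *ᵥ u := by rw [← vecMul_transpose, hPs]
    rw [dotProduct_mulVec, hvm, dotProduct_comm]
  have key : ∀ t : ℝ, 0 ≤ (z ⬝ᵥ (P *ᵥ z)) * (t * t) + (2 * (x ⬝ᵥ (P *ᵥ z))) * t
      + x ⬝ᵥ (P *ᵥ x) := by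
    intro t
    have h0 := hP.dotProduct_mulVec_nonneg (x + t • z)
    rw [star_trivial] at h0
    have expand : (x + t • z) ⬝ᵥ (P *ᵥ (x + t • z)) =
        (z ⬝ᵥ (P *ᵥ z)) * (t * t) + (2 * (x ⬝ᵥ (P *ᵥ z))) * t + x ⬝ᵥ (P *ᵥ x) := by
      simp only [mulVec_add, mulVec_smul, dotProduct_add, add_dotProduct,
        dotProduct_smul, smul_dotProduct, smul_eq_mul, hsymm z x]
      ring
    linarith [expand ▸ h0]
  have hd := discrim_le_zero key
  rw [discrim] at hd
  nlinarith [hd]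

lemma bilin_bound {n : ℕ} {C D : Matrix (Fin n) (Fin n) ℝ}
    (h1 : (C - D).PosSemidef) (h2 : (C + D).PosSemidef) (x z : Fin n → ℝ) :
    (x ⬝ᵥ (D *ᵥ z))^2 ≤ (x ⬝ᵥ (C *ᵥ x)) * (z ⬝ᵥ (C *ᵥ z)) := by
  have hp1 := h1.dotProduct_mulVec_nonneg x; have hp2 := h1.dotProduct_mulVec_nonneg z; have hq1 := h2.dotProduct_mulVec_nonneg x; have hq2 := h2.dotProduct_mulVec_nonneg z
  rw [star_trivial] at hp1 hp2 hq1 hq2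
  have hα := cs_aux h2 x z
  have hβ := cs_aux h1 x z
  set p1 := x ⬝ᵥ ((C - D) *ᵥ x)
  set p2 := z ⬝ᵥ ((C - D) *ᵥ z)
  set q1 := x ⬝ᵥ ((C + D) *ᵥ x)
  set q2 := z ⬝ᵥ ((C + D) *ᵥ z)
  set α := x ⬝ᵥ ((C + D) *ᵥ z)
  set β := x ⬝ᵥ ((C - D) *ᵥ z)
  have e1 : x ⬝ᵥ (D *ᵥ z) = (α - β) / 2 := by
    simp only [α, β, sub_mulVec, add_mulVec, dotProduct_sub, dotProduct_add]; ring
  have e2 : x ⬝ᵥ (C *ᵥ x) = (q1 + p1) / 2 := by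
    simp only [q1, p1, sub_mulVec, add_mulVec, dotProduct_sub, dotProduct_add]; ring
  have e3 : z ⬝ᵥ (C *ᵥ z) = (q2 + p2) / 2 := by
    simp only [q2, p2, sub_mulVec, add_mulVec, dotProduct_sub, dotProduct_add]; ring
  rw [e1, e2, e3]
  have habs : α^2 * β^2 ≤ (q1*q2) * (p1*p2) :=
    mul_le_mul hα hβ (sq_nonneg β) (mul_nonneg hq1 hq2)
  nlinarith [habs, sq_nonneg (q1*p2 - p1*q2), sq_nonneg (2*α*β + (q1*p2 + p1*q2)),
    sq_nonneg (α - β), sq_nonneg (α + β), mul_nonneg hq1 hp2, mul_nonneg hp1 hq2]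

lemma endgame {a b c K : ℝ} (ha : 0 ≤ a) (hb : 0 ≤ b) (hc : 0 ≤ c) (hK : 0 ≤ K)
    (h : (a + b)^2 ≤ K * (b + c * a)) : a ≤ K * (1/4 + c) := by
  rcases eq_or_lt_of_le hK with hK0 | hKpos
  · subst hK0
    nlinarith [h, hb, mul_nonneg ha hb, sq_nonneg b]
  by_cases hc34 : c ≤ 3/4
  · have h1 : K * (4*a*(1-c)) ≤ K * K := by
      nlinarith [sq_nonneg (2*(a+b) - K), h]
    have h2 : 4*a*(1-c) ≤ K := le_of_mul_le_mul_left h1 hKpos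
    have hcc : (0:ℝ) ≤ K * (c * (3/4 - c)) :=
      mul_nonneg hKpos.le (mul_nonneg hc (by linarith))
    nlinarith [h2, hcc]
  · push_neg at hc34
    by_contra hcon
    push_neg at hcon
    have hKc : K * c + K/4 < a := by nlinarith [hcon]
    have haK : K < a := by nlinarith [mul_nonneg hKpos.le hc, hc34, hKpos]
    have hbfac : (0:ℝ) ≤ b * (2*a + b - K) := mul_nonneg hb (by linarith)
    -- a^2 ≤ K*c*a
    have hsq : a^2 ≤ K*c*a := by nlinarith [h, hbfac]
    nlinarith [hsq, hKc, hKpos]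

/-- If `(1−ε)L_G − εγI ⪯ L_H ⪯ (1+ε)L_G + εγI` with `0 ≤ ε < 1`, `γ ≥ 0` and
`λ > 0`, and `f̂ = (λL_G + I)⁻¹ y`, `f̃ = (λL_H + I)⁻¹ y`, then
`‖f̃ − f̂‖² ≤ (ε²/(1−ε)) (1/4 + λγ) (λ f̂ᵀ L_G f̂ + λγ ‖f̂‖²)`. -/
theorem stmt_6 (n : ℕ) (LG LH : Matrix (Fin n) (Fin n) ℝ)
    (hG : LG.PosSemidef) (hH : LH.PosSemidef) (ε γ lam : ℝ)
    (hε0 : 0 ≤ ε) (hε1 : ε < 1) (hγ : 0 ≤ γ) (hlam : 0 < lam)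
    (hlow : (LH - ((1 - ε) • LG - (ε * γ) • (1 : Matrix (Fin n) (Fin n) ℝ))).PosSemidef)
    (hup : (((1 + ε) • LG + (ε * γ) • (1 : Matrix (Fin n) (Fin n) ℝ)) - LH).PosSemidef)
    (y fhat ftil : Fin n → ℝ)
    (hfhat : fhat = (lam • LG + (1 : Matrix (Fin n) (Fin n) ℝ))⁻¹ *ᵥ y)
    (hftil : ftil = (lam • LH + (1 : Matrix (Fin n) (Fin n) ℝ))⁻¹ *ᵥ y) :
    (ftil - fhat) ⬝ᵥ (ftil - fhat) ≤
      ε ^ 2 / (1 - ε) * (1 / 4 + lam * γ) *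
        (lam * (fhat ⬝ᵥ (LG *ᵥ fhat)) + lam * γ * (fhat ⬝ᵥ fhat)) := by
  have h1ε : (0:ℝ) < 1 - ε := by linarith
  set A := lam • LG + (1 : Matrix (Fin n) (Fin n) ℝ) with hAdef
  set B := lam • LH + (1 : Matrix (Fin n) (Fin n) ℝ) with hBdef
  have hA : A.PosDef := Matrix.PosDef.posSemidef_add (psd_smul' hG hlam.le) Matrix.PosDef.one
  have hB : B.PosDef := Matrix.PosDef.posSemidef_add (psd_smul' hH hlam.le) Matrix.PosDef.one
  have hAy : A *ᵥ fhat = y := by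
    rw [hfhat, mulVec_mulVec, Matrix.mul_nonsing_inv _ hA.det_pos.ne'.isUnit, one_mulVec]
  have hBy : B *ᵥ ftil = y := by
    rw [hftil, mulVec_mulVec, Matrix.mul_nonsing_inv _ hB.det_pos.ne'.isUnit, one_mulVec]
  set δ := ftil - fhat with hδdef
  set D := lam • (LG - LH) with hDdef
  have hBδ : B *ᵥ δ = D *ᵥ fhat := by
    have hABD : D = A - B := by
      rw [hAdef, hBdef, hDdef, smul_sub]; abel
    rw [hδdef, mulVec_sub, hBy, hABD, sub_mulVec, hAy]
  -- scalar abbreviations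
  set a := δ ⬝ᵥ δ with hadef
  set bH := lam * (δ ⬝ᵥ (LH *ᵥ δ)) with hbHdef
  set bG := lam * (δ ⬝ᵥ (LG *ᵥ δ)) with hbGdef
  set c := lam * γ with hcdef
  set mf := lam * (fhat ⬝ᵥ (LG *ᵥ fhat)) + c * (fhat ⬝ᵥ fhat) with hmfdef
  have hc0 : (0:ℝ) ≤ c := mul_nonneg hlam.le hγ
  have ha : 0 ≤ a := by
    rw [hadef]; exact Finset.sum_nonneg fun i _ => mul_self_nonneg _
  have hbH : 0 ≤ bH := mul_nonneg hlam.le (by simpa using hH.dotProduct_mulVec_nonneg δ)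
  have hbG : 0 ≤ bG := mul_nonneg hlam.le (by simpa using hG.dotProduct_mulVec_nonneg δ)
  have hmf : 0 ≤ mf := by
    have h1 := hG.dotProduct_mulVec_nonneg fhat
    have h2 : (0:ℝ) ≤ fhat ⬝ᵥ fhat := Finset.sum_nonneg fun i _ => mul_self_nonneg _
    rw [star_trivial] at h1
    exact add_nonneg (mul_nonneg hlam.le h1)
      (mul_nonneg (mul_nonneg hlam.le hγ) h2)
  -- s = a + bH
  have hs : δ ⬝ᵥ (B *ᵥ δ) = a + bH := by
    rw [hBdef, add_mulVec, smul_mulVec, one_mulVec, dotProduct_add, dotProduct_smul,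
      smul_eq_mul]
    ring
  -- the comparison matrix C
  set C := ε • (lam • LG + (lam * γ) • (1 : Matrix (Fin n) (Fin n) ℝ)) with hCdef
  have hCD1 : C - D = lam • (LH - ((1 - ε) • LG - (ε * γ) • (1 : Matrix (Fin n) (Fin n) ℝ))) := by
    ext i j
    simp [hCdef, hDdef, Matrix.smul_apply, Matrix.sub_apply, Matrix.add_apply, Matrix.one_apply]
    split_ifs <;> ring
  have hCD2 : C + D =
      lam • ((((1 + ε) • LG + (ε * γ) • (1 : Matrix (Fin n) (Fin n) ℝ)) - LH)) := by
    ext i j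
    simp [hCdef, hDdef, Matrix.smul_apply, Matrix.sub_apply, Matrix.add_apply, Matrix.one_apply]
    split_ifs <;> ring
  have h1 : (C - D).PosSemidef := hCD1 ▸ psd_smul' hlow hlam.le
  have h2 : (C + D).PosSemidef := hCD2 ▸ psd_smul' hup hlam.le
  have hkey := bilin_bound h1 h2 δ fhat
  -- evaluate the three quadratic forms
  have eδ : δ ⬝ᵥ (C *ᵥ δ) = ε * (bG + c * a) := by
    rw [hCdef]
    simp only [smul_mulVec, add_mulVec, one_mulVec, dotProduct_smul, dotProduct_add,
      smul_eq_mul]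
    rfl
  have ef : fhat ⬝ᵥ (C *ᵥ fhat) = ε * mf := by
    rw [hCdef]
    simp only [smul_mulVec, add_mulVec, one_mulVec, dotProduct_smul, dotProduct_add,
      smul_eq_mul]
    rfl
  have eD : δ ⬝ᵥ (D *ᵥ fhat) = a + bH := by rw [← hBδ, hs]
  rw [eδ, ef, eD] at hkey
  -- sparsifier lower bound on bG
  have hlowq : (1 - ε) * bG ≤ bH + ε * c * a := by
    have h0 := hlow.dotProduct_mulVec_nonneg δ
    rw [star_trivial] at h0
    simp only [sub_mulVec, smul_mulVec, one_mulVec, dotProduct_sub, dotProduct_smul,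
      smul_eq_mul] at h0
    rw [hbGdef, hbHdef, hcdef, hadef]
    nlinarith [h0, hlam]
  -- combine: (a+bH)^2 ≤ K*(bH + c*a) with K = ε^2/(1-ε)*mf
  have hfinal : (a + bH)^2 ≤ (ε^2/(1-ε)*mf) * (bH + c * a) := by
    rw [div_mul_eq_mul_div, div_mul_eq_mul_div, le_div_iff₀ h1ε]
    have hε2mf : 0 ≤ ε^2 * mf := mul_nonneg (sq_nonneg ε) hmf
    nlinarith [mul_le_mul_of_nonneg_right hkey h1ε.le,
      mul_le_mul_of_nonneg_left hlowq hε2mf,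
      mul_nonneg hε2mf (mul_nonneg hc0 ha)]
  have hK : 0 ≤ ε^2/(1-ε)*mf := mul_nonneg (div_nonneg (sq_nonneg ε) h1ε.le) hmf
  have := endgame ha hbH hc0 hK hfinal
  calc a ≤ (ε^2/(1-ε)*mf) * (1/4 + c) := this
    _ = ε ^ 2 / (1 - ε) * (1 / 4 + lam * γ) *
        (lam * (fhat ⬝ᵥ (LG *ᵥ fhat)) + lam * γ * (fhat ⬝ᵥ fhat)) := by
      rw [hmfdef, hcdef]; ring
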